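/- Let $G$ be a finite group and $f, x : G \to \mathbb{C}$, with convolution $(f*x)(g) = \mathbb{E}_{h \in G} f(gh^{-1}) x(h)$ and inner product $\langle x, y \rangle = \mathbb{E}_{g \in G} \overline{x(g)} y(g)$. Then for every real $p \geq 1$: $|\langle x, f * x \rangle| \leq \|f\|_{S_p} \, \|x\|_{L^{2p/(p+1)}(G)}^2$, where $\|f\|_{S_p} = (\sum_{\rho \in \widehat{G}} d_\rho \|\widehat{f}(\rho)\|_{S_p}^p)^{1/p}$. -/

import Mathlib

open Finset Matrix
open scoped ComplexOrder

/-- The singular values of a square complex matrix: square roots of the eigenvalues of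
`MᴴM`. -/
noncomputable def singularValues {n : Type*} [Fintype n] [DecidableEq n]
    (M : Matrix n n ℂ) : n → ℝ :=
  fun i => Real.sqrt ((Matrix.posSemidef_conjTranspose_mul_self M).1.eigenvalues i)

/-- The Schatten `p`-norm (`p` real, `p ≥ 1`) of a square complex matrix. -/
noncomputable def schattenNorm {n : Type*} [Fintype n] [DecidableEq n]
    (p : ℝ) (M : Matrix n n ℂ) : ℝ :=
  (∑ i, singularValues M i ^ p) ^ (1 / p)

/-- The matrix of the convolution operator `x ↦ f * x` on `ℂ^G`, with entries
`f(g h⁻¹)/|G|`. -/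
noncomputable def convMatrix {G : Type*} [Group G] [Fintype G] [DecidableEq G]
    (f : G → ℂ) : Matrix G G ℂ :=
  Matrix.of fun g h => f (g * h⁻¹) / (Fintype.card G : ℂ)

open scoped ComplexConjugate

namespace Stmt18

/-- The complex absolute value, as an absolute value built from the norm. -/
noncomputable def Complex.abs : AbsoluteValue ℂ ℝ where
  toFun z := ‖z‖
  map_mul' := norm_mul
  nonneg' := norm_nonneg
  eq_zero' _ := norm_eq_zero
  add_le' := norm_add_le

lemma Complex.norm_eq_abs (z : ℂ) : ‖z‖ = Complex.abs z := rfl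

lemma Complex.abs_natCast (n : ℕ) : Complex.abs (n : ℂ) = n := by
  show ‖(n : ℂ)‖ = n
  simp

lemma Complex.abs_conj (z : ℂ) : Complex.abs (conj z) = Complex.abs z :=
  _root_.Complex.norm_conj z

lemma Complex.abs_ofReal (r : ℝ) : Complex.abs (r : ℂ) = |r| := by
  show ‖(r : ℂ)‖ = |r|
  simp

lemma Complex.abs_exp (z : ℂ) : Complex.abs (_root_.Complex.exp z) = Real.exp z.re :=
  _root_.Complex.norm_exp z

lemma Complex.sq_abs (z : ℂ) : Complex.abs z ^ 2 = _root_.Complex.normSq z :=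
  _root_.Complex.sq_norm z

/-- Cauchy–Schwarz for complex sums. -/
lemma cs_abs {n : Type*} [Fintype n] (a b : n → ℂ) :
    Complex.abs (∑ i, a i * b i) ≤
      Real.sqrt (∑ i, Complex.abs (a i) ^ 2) * Real.sqrt (∑ i, Complex.abs (b i) ^ 2) := by
  calc Complex.abs (∑ i, a i * b i) ≤ ∑ i, Complex.abs (a i * b i) :=
        Complex.abs.sum_le _ _
    _ = ∑ i, Complex.abs (a i) * Complex.abs (b i) := by simp [_root_.map_mul]
    _ ≤ _ := Real.sum_mul_le_sqrt_mul_sqrt _ _ _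

/-- rpow bound on a strip of exponents. -/
lemma rpow_le_strip {r a b t : ℝ} (hr : 0 ≤ r) (ha : 0 ≤ a) (hat : a ≤ t) (htb : t ≤ b) :
    r ^ t ≤ r ^ a + r ^ b := by
  rcases le_or_gt r 1 with h | h
  · rcases eq_or_lt_of_le hr with h0 | h0
    · rcases eq_or_lt_of_le hat with rfl | h1
      · nlinarith [Real.rpow_nonneg hr b]
      · rw [← h0, Real.zero_rpow (by linarith : t ≠ 0)]
        positivity
    · have := Real.rpow_le_rpow_of_exponent_ge h0 h hat
      nlinarith [Real.rpow_nonneg hr b]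
  · have := Real.rpow_le_rpow_of_exponent_le h.le htb
    nlinarith [Real.rpow_nonneg hr a]

/-- Bessel-type inequality. -/
lemma bessel {n : Type*} [Fintype n] [DecidableEq n] (W : Matrix n n ℂ) (d : n → ℝ)
    (hd0 : ∀ i, 0 ≤ d i) (hd1 : ∀ i, d i ≤ 1)
    (horth : ∀ i j, ∑ g, conj (W g i) * W g j = if i = j then (d i : ℂ) else 0)
    (y : n → ℂ) :
    ∑ i, Complex.normSq (∑ g, conj (y g) * W g i) ≤ ∑ g, Complex.normSq (y g) := by
  classical
  set c : n → ℂ := fun i => ∑ g, conj (y g) * W g i with hc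
  set w : n → ℂ := fun g => ∑ i, conj (c i) * W g i with hw
  have hwg : ∀ g, w g = ∑ i, conj (c i) * W g i := fun g => rfl
  have hcg : ∀ i, c i = ∑ g, conj (y g) * W g i := fun i => rfl
  have hcw : ∀ g, conj (w g) = ∑ i, c i * conj (W g i) := by
    intro g
    rw [hwg, map_sum]
    exact Finset.sum_congr rfl fun i _ => by simp [_root_.map_mul]
  have hconj_c : ∀ i, conj (c i) = ∑ g, y g * conj (W g i) := by
    intro i
    rw [hcg, map_sum]
    exact Finset.sum_congr rfl fun g _ => by simp [_root_.map_mul, mul_comm]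
  have h1 : ∑ g, conj (y g) * w g = ∑ i, (Complex.normSq (c i) : ℂ) := by
    calc ∑ g, conj (y g) * w g
        = ∑ g, ∑ i, conj (c i) * (conj (y g) * W g i) := by
          refine Finset.sum_congr rfl fun g _ => ?_
          rw [hwg, Finset.mul_sum]
          exact Finset.sum_congr rfl fun i _ => by ring
      _ = ∑ i, ∑ g, conj (c i) * (conj (y g) * W g i) := Finset.sum_comm
      _ = ∑ i, conj (c i) * c i := by
          refine Finset.sum_congr rfl fun i _ => ?_
          rw [← Finset.mul_sum, ← hcg]
      _ = ∑ i, (Complex.normSq (c i) : ℂ) := by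
          refine Finset.sum_congr rfl fun i _ => ?_
          rw [← Complex.normSq_eq_conj_mul_self]
  have h2 : ∑ g, conj (w g) * y g = ∑ i, (Complex.normSq (c i) : ℂ) := by
    calc ∑ g, conj (w g) * y g
        = ∑ g, ∑ i, c i * (y g * conj (W g i)) := by
          refine Finset.sum_congr rfl fun g _ => ?_
          rw [hcw, Finset.sum_mul]
          exact Finset.sum_congr rfl fun i _ => by ring
      _ = ∑ i, ∑ g, c i * (y g * conj (W g i)) := Finset.sum_comm
      _ = ∑ i, c i * conj (c i) := by
          refine Finset.sum_congr rfl fun i _ => ?_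
          rw [← Finset.mul_sum, ← hconj_c]
      _ = ∑ i, (Complex.normSq (c i) : ℂ) := by
          refine Finset.sum_congr rfl fun i _ => ?_
          rw [Complex.mul_conj]
  have h3 : ∑ g, conj (w g) * w g = ∑ i, (d i : ℂ) * (Complex.normSq (c i) : ℂ) := by
    calc ∑ g, conj (w g) * w g
        = ∑ g, ∑ i, ∑ j, (c i * conj (c j)) * (conj (W g i) * W g j) := by
          refine Finset.sum_congr rfl fun g _ => ?_
          rw [hcw, hwg, Finset.sum_mul_sum]
          exact Finset.sum_congr rfl fun i _ => Finset.sum_congr rfl fun j _ => by ring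
      _ = ∑ i, ∑ j, ∑ g, (c i * conj (c j)) * (conj (W g i) * W g j) := by
          rw [Finset.sum_comm]
          exact Finset.sum_congr rfl fun i _ => Finset.sum_comm
      _ = ∑ i, ∑ j, (c i * conj (c j)) * (if i = j then (d i : ℂ) else 0) := by
          refine Finset.sum_congr rfl fun i _ => Finset.sum_congr rfl fun j _ => ?_
          rw [← Finset.mul_sum, horth]
      _ = ∑ i, (c i * conj (c i)) * (d i : ℂ) := by
          refine Finset.sum_congr rfl fun i _ => ?_
          rw [Finset.sum_eq_single_of_mem i (Finset.mem_univ i)]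
          · simp
          · intro j _ hj
            simp [Ne.symm hj]
      _ = ∑ i, (d i : ℂ) * (Complex.normSq (c i) : ℂ) := by
          refine Finset.sum_congr rfl fun i _ => ?_
          rw [Complex.mul_conj, mul_comm]
  have expand : ∀ g, (Complex.normSq (y g - w g) : ℂ)
      = conj (y g) * y g - conj (y g) * w g - conj (w g) * y g + conj (w g) * w g := by
    intro g
    rw [Complex.normSq_eq_conj_mul_self, map_sub]
    ring
  have hY : ∑ g, conj (y g) * y g = ∑ g, (Complex.normSq (y g) : ℂ) := by
    refine Finset.sum_congr rfl fun g _ => ?_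
    rw [← Complex.normSq_eq_conj_mul_self]
  have mainC : (↑(∑ g, Complex.normSq (y g - w g)) : ℂ)
      = ↑(∑ g, Complex.normSq (y g) - 2 * ∑ i, Complex.normSq (c i)
          + ∑ i, d i * Complex.normSq (c i)) := by
    push_cast
    calc ∑ g, (Complex.normSq (y g - w g) : ℂ)
        = ∑ g, (conj (y g) * y g - conj (y g) * w g - conj (w g) * y g
            + conj (w g) * w g) := Finset.sum_congr rfl fun g _ => expand g
      _ = (∑ g, conj (y g) * y g) - (∑ g, conj (y g) * w g) - (∑ g, conj (w g) * y g)
            + ∑ g, conj (w g) * w g := by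
          rw [Finset.sum_add_distrib, Finset.sum_sub_distrib, Finset.sum_sub_distrib]
      _ = _ := by
          rw [h1, h2, h3, hY]
          push_cast
          ring
  have mainR : ∑ g, Complex.normSq (y g - w g)
      = ∑ g, Complex.normSq (y g) - 2 * ∑ i, Complex.normSq (c i)
          + ∑ i, d i * Complex.normSq (c i) := by exact_mod_cast mainC
  have hpos : 0 ≤ ∑ g, Complex.normSq (y g - w g) :=
    Finset.sum_nonneg fun g _ => Complex.normSq_nonneg _
  have hD : ∑ i, d i * Complex.normSq (c i) ≤ ∑ i, Complex.normSq (c i) := by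
    refine Finset.sum_le_sum fun i _ => ?_
    nlinarith [Complex.normSq_nonneg (c i), hd1 i, hd0 i]
  linarith [mainR ▸ hpos]

/-- Commutation passes through the functional calculus. -/
lemma comm_diag {n : Type*} [Fintype n] [DecidableEq n] (V A : Matrix n n ℂ)
    (hV1 : Vᴴ * V = 1) (hV2 : V * Vᴴ = 1) (μ ψ : n → ℂ)
    (hcomm : A * (V * diagonal μ * Vᴴ) = V * diagonal μ * Vᴴ * A)
    (hψ : ∀ i j, μ i = μ j → ψ i = ψ j) :
    A * (V * diagonal ψ * Vᴴ) = V * diagonal ψ * Vᴴ * A := by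
  have hA : A = V * (Vᴴ * A * V) * Vᴴ := by
    calc A = 1 * A * 1 := by rw [one_mul, mul_one]
      _ = (V * Vᴴ) * A * (V * Vᴴ) := by rw [hV2]
      _ = V * (Vᴴ * A * V) * Vᴴ := by noncomm_ring
  set B := Vᴴ * A * V with hB
  have hBd : B * diagonal μ = diagonal μ * B := by
    have h1 : Vᴴ * (A * (V * diagonal μ * Vᴴ)) * V = Vᴴ * (V * diagonal μ * Vᴴ * A) * V := by
      rw [hcomm]
    calc B * diagonal μ = (Vᴴ * A * V) * diagonal μ * 1 := by rw [mul_one]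
      _ = (Vᴴ * A * V) * diagonal μ * (Vᴴ * V) := by rw [hV1]
      _ = Vᴴ * (A * (V * diagonal μ * Vᴴ)) * V := by noncomm_ring
      _ = Vᴴ * (V * diagonal μ * Vᴴ * A) * V := h1
      _ = (Vᴴ * V) * diagonal μ * (Vᴴ * A * V) := by noncomm_ring
      _ = 1 * diagonal μ * B := by rw [hV1, hB]
      _ = diagonal μ * B := by rw [one_mul]
  have hBψ : B * diagonal ψ = diagonal ψ * B := by
    ext i j
    have hij := congrFun (congrFun hBd i) j
    rw [mul_diagonal, diagonal_mul] at hij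
    rw [mul_diagonal, diagonal_mul]
    by_cases hμ : μ i = μ j
    · rw [hψ i j hμ, mul_comm]
    · have hB0 : B i j = 0 := by
        by_contra hc
        have h2 : B i j * μ j = B i j * μ i := by linear_combination hij
        exact hμ (mul_left_cancel₀ hc h2).symm
      rw [hB0, mul_zero, zero_mul]
  have hL : A * (V * diagonal ψ * Vᴴ) = V * (B * diagonal ψ) * Vᴴ := by
    conv_lhs => rw [hA]
    calc V * B * Vᴴ * (V * diagonal ψ * Vᴴ)
        = V * B * (Vᴴ * V) * (diagonal ψ * Vᴴ) := by noncomm_ring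
      _ = V * B * 1 * (diagonal ψ * Vᴴ) := by rw [hV1]
      _ = V * (B * diagonal ψ) * Vᴴ := by noncomm_ring
  have hR : V * diagonal ψ * Vᴴ * A = V * (diagonal ψ * B) * Vᴴ := by
    conv_lhs => rw [hA]
    calc V * diagonal ψ * Vᴴ * (V * B * Vᴴ)
        = V * diagonal ψ * (Vᴴ * V) * (B * Vᴴ) := by noncomm_ring
      _ = V * diagonal ψ * 1 * (B * Vᴴ) := by rw [hV1]
      _ = V * (diagonal ψ * B) * Vᴴ := by noncomm_ring
  rw [hL, hBψ, ← hR]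

section Main

variable {G : Type*} [Group G] [Fintype G] [DecidableEq G]
variable (f x : G → ℂ) (p : ℝ)

noncomputable def MM : Matrix G G ℂ := convMatrix f

noncomputable def mu : G → ℝ :=
  (Matrix.posSemidef_conjTranspose_mul_self (MM f)).1.eigenvalues

noncomputable def VV : Matrix G G ℂ :=
  ((Matrix.posSemidef_conjTranspose_mul_self (MM f)).1.eigenvectorUnitary : Matrix G G ℂ)

noncomputable def WW : Matrix G G ℂ :=
  MM f * VV f * diagonal (fun i => if mu f i = 0 then 0 else ((Real.sqrt (mu f i) : ℝ) : ℂ)⁻¹)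

noncomputable def ee (z : ℂ) : G → ℂ :=
  fun i => if mu f i = 0 then 0 else Complex.exp ((p * z / 2) * (Real.log (mu f i) : ℂ))

noncomputable def Mz (z : ℂ) : Matrix G G ℂ := WW f * diagonal (ee f p z) * (VV f)ᴴ

noncomputable def yy (z : ℂ) : G → ℂ := fun g =>
  if x g = 0 then 0 else
    (x g / (Complex.abs (x g) : ℂ)) *
      Complex.exp (((2 * p / (p + 1) : ℝ) * (1 + z) / 2) * (Real.log (Complex.abs (x g)) : ℂ))

/-- analytic continuation of `z ↦ conj (yy x p (conj z))`. -/
noncomputable def yyc (z : ℂ) : G → ℂ := fun g =>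
  if x g = 0 then 0 else
    (conj (x g) / (Complex.abs (x g) : ℂ)) *
      Complex.exp (((2 * p / (p + 1) : ℝ) * (1 + z) / 2) * (Real.log (Complex.abs (x g)) : ℂ))

noncomputable def FF (z : ℂ) : ℂ :=
  (Fintype.card G : ℂ)⁻¹ *
    ∑ i, (∑ g, yyc x p z g * WW f g i) * ee f p z i * (∑ h, conj (VV f h i) * yy x p z h)

variable {f x p}

lemma mu_nonneg (i : G) : 0 ≤ mu f i :=
  (Matrix.posSemidef_conjTranspose_mul_self (MM f)).eigenvalues_nonneg i

lemma hV1 : (VV f)ᴴ * VV f = 1 := by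
  rw [← Matrix.star_eq_conjTranspose]
  exact Unitary.coe_star_mul_self _

lemma hV2 : VV f * (VV f)ᴴ = 1 := by
  rw [← Matrix.star_eq_conjTranspose]
  exact Unitary.coe_mul_star_self _

lemma Hspec : (MM f)ᴴ * MM f = VV f * diagonal (fun i => (mu f i : ℂ)) * (VV f)ᴴ := by
  have h := (Matrix.posSemidef_conjTranspose_mul_self (MM f)).1.spectral_theorem
  rw [← Matrix.star_eq_conjTranspose]
  exact h

lemma spectral : (VV f)ᴴ * ((MM f)ᴴ * MM f) * VV f = diagonal (fun i => (mu f i : ℂ)) := by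
  rw [Hspec, mul_assoc, mul_assoc, hV1, mul_one, ← mul_assoc, hV1, one_mul]

/-- `WᴴW` is the diagonal indicator. -/
lemma WtW : (WW f)ᴴ * WW f = diagonal (fun i => if mu f i = 0 then (0:ℂ) else 1) := by
  have key : (WW f)ᴴ * WW f =
      diagonal (star fun i => if mu f i = 0 then 0 else ((Real.sqrt (mu f i) : ℝ) : ℂ)⁻¹) *
        ((VV f)ᴴ * ((MM f)ᴴ * MM f) * VV f) *
        diagonal (fun i => if mu f i = 0 then 0 else ((Real.sqrt (mu f i) : ℝ) : ℂ)⁻¹) := by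
    unfold WW
    rw [conjTranspose_mul, conjTranspose_mul, diagonal_conjTranspose]
    noncomm_ring
  rw [key, spectral, diagonal_mul_diagonal, diagonal_mul_diagonal]
  refine congrArg diagonal (funext fun i => ?_)
  simp only [Pi.star_apply]
  by_cases hi : mu f i = 0
  · simp [hi]
  · have h0 : 0 < mu f i := lt_of_le_of_ne (mu_nonneg i) (Ne.symm hi)
    have hs : Real.sqrt (mu f i) ≠ 0 := Real.sqrt_ne_zero'.2 h0
    have hsC : ((Real.sqrt (mu f i) : ℝ) : ℂ) ≠ 0 := by exact_mod_cast hs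
    have hmul : ((Real.sqrt (mu f i) : ℝ) : ℂ) * ((Real.sqrt (mu f i) : ℝ) : ℂ)
        = (mu f i : ℂ) := by
      rw [← Complex.ofReal_mul, Real.mul_self_sqrt (mu_nonneg i)]
    simp only [hi, if_false, ite_false, star_inv₀, RCLike.star_def, Complex.conj_ofReal]
    field_simp
    linear_combination -hmul

lemma MVtMV : (MM f * VV f)ᴴ * (MM f * VV f) = diagonal (fun i => (mu f i : ℂ)) := by
  rw [conjTranspose_mul, ← spectral (f := f)]
  noncomm_ring

lemma MV_col_zero {i : G} (hi : mu f i = 0) (g : G) : (MM f * VV f) g i = 0 := by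
  have h := congrFun (congrFun (MVtMV (f := f)) i) i
  rw [Matrix.mul_apply, diagonal_apply_eq] at h
  have h2 : ∑ g : G, (Complex.normSq ((MM f * VV f) g i) : ℂ) = 0 := by
    calc ∑ g : G, (Complex.normSq ((MM f * VV f) g i) : ℂ)
        = ∑ j : G, (MM f * VV f)ᴴ i j * (MM f * VV f) j i := by
          refine Finset.sum_congr rfl fun g _ => ?_
          rw [conjTranspose_apply, RCLike.star_def, ← Complex.normSq_eq_conj_mul_self]
      _ = ((mu f i : ℝ) : ℂ) := h
      _ = 0 := by rw [hi]; norm_num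
  have h3 : ∑ g : G, Complex.normSq ((MM f * VV f) g i) = 0 := by exact_mod_cast h2
  have h4 := (Finset.sum_eq_zero_iff_of_nonneg
    (fun g _ => Complex.normSq_nonneg _)).1 h3 g (Finset.mem_univ g)
  exact Complex.normSq_eq_zero.1 h4

lemma WW_apply (g i : G) :
    WW f g i = (MM f * VV f) g i *
      (if mu f i = 0 then 0 else ((Real.sqrt (mu f i) : ℝ) : ℂ)⁻¹) := by
  unfold WW
  rw [mul_diagonal]

lemma W_mul_diag_sqrt :
    WW f * diagonal (fun i => ((Real.sqrt (mu f i) : ℝ) : ℂ)) = MM f * VV f := by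
  ext g i
  rw [mul_diagonal, WW_apply]
  by_cases hi : mu f i = 0
  · simp [hi, MV_col_zero hi g]
  · have h0 : 0 < mu f i := lt_of_le_of_ne (mu_nonneg i) (Ne.symm hi)
    have hs : ((Real.sqrt (mu f i) : ℝ) : ℂ) ≠ 0 := by
      exact_mod_cast Real.sqrt_ne_zero'.2 h0
    rw [if_neg hi]
    field_simp

/-- `Mz` as `M` times a function of `H`. -/
lemma Mz_eq_M_mul (z : ℂ) :
    Mz f p z = MM f * (VV f * diagonal (fun i => if mu f i = 0 then 0 else
      Complex.exp (((p * z - 1) / 2) * (Real.log (mu f i) : ℂ))) * (VV f)ᴴ) := by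
  unfold Mz
  rw [show MM f * (VV f * diagonal (fun i => if mu f i = 0 then 0 else
      Complex.exp (((p * z - 1) / 2) * (Real.log (mu f i) : ℂ))) * (VV f)ᴴ)
    = (MM f * VV f * diagonal (fun i => if mu f i = 0 then 0 else
      Complex.exp (((p * z - 1) / 2) * (Real.log (mu f i) : ℂ)))) * (VV f)ᴴ by
      noncomm_ring]
  congr 1
  ext g i
  rw [mul_diagonal, mul_diagonal, WW_apply]
  by_cases hi : mu f i = 0
  · simp [hi, ee]
  · have h0 : 0 < mu f i := lt_of_le_of_ne (mu_nonneg i) (Ne.symm hi)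
    have hsqrt : ((Real.sqrt (mu f i) : ℝ) : ℂ)
        = Complex.exp (((Real.log (mu f i) / 2 : ℝ) : ℂ)) := by
      rw [← Complex.ofReal_exp]
      congr 1
      rw [← Real.log_sqrt (mu_nonneg i), Real.exp_log (Real.sqrt_pos.2 h0)]
    rw [if_neg hi, if_neg hi, hsqrt, ← Complex.exp_neg, ee, if_neg hi, mul_assoc,
      ← Complex.exp_add]
    congr 2
    push_cast
    ring

/-- Right translation matrices. -/
noncomputable def RR (k : G) : Matrix G G ℂ := Matrix.of fun g h => if g * k = h then 1 else 0

lemma RR_apply (k g h : G) : RR (G := G) k g h = if g * k = h then 1 else 0 := rfl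

lemma mul_R_apply (A : Matrix G G ℂ) (k g h : G) : (A * RR k) g h = A g (h * k⁻¹) := by
  rw [Matrix.mul_apply]
  rw [Finset.sum_eq_single_of_mem (h * k⁻¹) (Finset.mem_univ _)]
  · simp [RR_apply, inv_mul_cancel_right]
  · intro j _ hj
    have : ¬ (j * k = h) := by
      intro hc
      exact hj (by rw [← hc]; group)
    simp [RR_apply, this]

lemma R_mul_apply (A : Matrix G G ℂ) (k g h : G) : (RR k * A) g h = A (g * k) h := by
  rw [Matrix.mul_apply]
  rw [Finset.sum_eq_single_of_mem (g * k) (Finset.mem_univ _)]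
  · simp [RR_apply]
  · intro j _ hj
    simp [RR_apply, Ne.symm hj]

lemma M_comm_R (k : G) : MM f * RR k = RR (G := G) k * MM f := by
  ext g h
  rw [mul_R_apply, R_mul_apply]
  show convMatrix f g (h * k⁻¹) = convMatrix f (g * k) h
  simp only [convMatrix, Matrix.of_apply]
  congr 2
  group

lemma Mt_comm_R (k : G) : (MM f)ᴴ * RR k = RR (G := G) k * (MM f)ᴴ := by
  ext g h
  rw [mul_R_apply, R_mul_apply, conjTranspose_apply, conjTranspose_apply]
  show star (convMatrix f (h * k⁻¹) g) = star (convMatrix f h (g * k))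
  simp only [convMatrix, Matrix.of_apply]
  congr 3
  group

lemma H_comm_R (k : G) : ((MM f)ᴴ * MM f) * RR k = RR (G := G) k * ((MM f)ᴴ * MM f) := by
  calc (MM f)ᴴ * MM f * RR k = (MM f)ᴴ * (MM f * RR k) := by rw [mul_assoc]
    _ = (MM f)ᴴ * (RR k * MM f) := by rw [M_comm_R]
    _ = ((MM f)ᴴ * RR k) * MM f := by rw [mul_assoc]
    _ = (RR k * (MM f)ᴴ) * MM f := by rw [Mt_comm_R]
    _ = RR k * ((MM f)ᴴ * MM f) := by rw [mul_assoc]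

lemma Mz_comm_R (z : ℂ) (k : G) : Mz f p z * RR k = RR (G := G) k * Mz f p z := by
  rw [Mz_eq_M_mul]
  set K := VV f * diagonal (fun i => if mu f i = 0 then 0 else
    Complex.exp (((p * z - 1) / 2) * (Real.log (mu f i) : ℂ))) * (VV f)ᴴ with hKdef
  have hK : RR (G := G) k * K = K * RR k := by
    rw [hKdef]
    refine comm_diag (VV f) (RR k) hV1 hV2 (fun i => (mu f i : ℂ)) _ ?_ ?_
    · rw [← Hspec, H_comm_R]
    · intro i j hij
      have : mu f i = mu f j := by simpa using hij
      rw [this]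
  calc MM f * K * RR k = MM f * (K * RR k) := by rw [mul_assoc]
    _ = MM f * (RR k * K) := by rw [hK]
    _ = MM f * RR k * K := by rw [mul_assoc]
    _ = RR k * MM f * K := by rw [M_comm_R]
    _ = RR k * (MM f * K) := by rw [mul_assoc]

lemma Mz_entry (z : ℂ) (g h : G) : Mz f p z g h = Mz f p z (g * h⁻¹) 1 := by
  have key := congrFun (congrFun (Mz_comm_R (f := f) (p := p) z h) (g * h⁻¹)) h
  rw [mul_R_apply, R_mul_apply] at key
  rw [mul_inv_cancel] at key
  conv_lhs => rw [show g = g * h⁻¹ * h by group]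
  exact key.symm

lemma Mz_apply (z : ℂ) (g h : G) :
    Mz f p z g h = ∑ i, WW f g i * ee f p z i * conj (VV f h i) := by
  unfold Mz
  rw [Matrix.mul_apply]
  refine Finset.sum_congr rfl fun i _ => ?_
  rw [mul_diagonal, conjTranspose_apply, RCLike.star_def]

lemma abs_ee_one {z : ℂ} (hz : z.re = 1) (hp0 : 0 < p) (i : G) :
    Complex.abs (ee f p z i) = Real.sqrt (mu f i) ^ p := by
  unfold ee
  by_cases hi : mu f i = 0
  · rw [if_pos hi, hi, map_zero, Real.sqrt_zero, Real.zero_rpow (ne_of_gt hp0)]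
  · have h0 : 0 < mu f i := lt_of_le_of_ne (mu_nonneg i) (Ne.symm hi)
    rw [if_neg hi,
      show (p : ℂ) * z / 2 * ((Real.log (mu f i) : ℝ) : ℂ)
        = ((p * Real.log (mu f i) / 2 : ℝ) : ℂ) * z by push_cast; ring,
      Complex.abs_exp, Complex.re_ofReal_mul, hz,
      Real.rpow_def_of_pos (Real.sqrt_pos.2 h0), Real.log_sqrt (mu_nonneg i)]
    ring_nf

lemma abs_ee_zero {z : ℂ} (hz : z.re = 0) (i : G) : Complex.abs (ee f p z i) ≤ 1 := by
  unfold ee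
  by_cases hi : mu f i = 0
  · simp [hi]
  · rw [if_neg hi,
      show (p : ℂ) * z / 2 * ((Real.log (mu f i) : ℝ) : ℂ)
        = ((p * Real.log (mu f i) / 2 : ℝ) : ℂ) * z by push_cast; ring,
      Complex.abs_exp, Complex.re_ofReal_mul, hz]
    simp

lemma abs_ee_strip {z : ℂ} (hz0 : 0 ≤ z.re) (hz1 : z.re ≤ 1) (hp0 : 0 < p) (i : G) :
    Complex.abs (ee f p z i) ≤ 1 + Real.sqrt (mu f i) ^ p := by
  unfold ee
  by_cases hi : mu f i = 0
  · rw [if_pos hi, map_zero]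
    positivity
  · have h0 : 0 < mu f i := lt_of_le_of_ne (mu_nonneg i) (Ne.symm hi)
    have hs0 : 0 < Real.sqrt (mu f i) := Real.sqrt_pos.2 h0
    rw [if_neg hi,
      show (p : ℂ) * z / 2 * ((Real.log (mu f i) : ℝ) : ℂ)
        = ((p * Real.log (mu f i) / 2 : ℝ) : ℂ) * z by push_cast; ring,
      Complex.abs_exp, Complex.re_ofReal_mul]
    have key : Real.exp (p * Real.log (mu f i) / 2 * z.re)
        = Real.sqrt (mu f i) ^ (p * z.re) := by
      rw [Real.rpow_def_of_pos hs0, Real.log_sqrt (mu_nonneg i)]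
      ring_nf
    rw [key]
    have := rpow_le_strip (r := Real.sqrt (mu f i)) (a := 0) (b := p) (t := p * z.re)
      hs0.le le_rfl (by positivity) (by nlinarith)
    rw [Real.rpow_zero] at this
    exact this

lemma col_W_le_one (i : G) : ∑ h, Complex.abs (WW f h i) ^ 2 ≤ 1 := by
  have h := congrFun (congrFun (WtW (f := f)) i) i
  rw [Matrix.mul_apply, diagonal_apply_eq] at h
  have h2 : (↑(∑ h, Complex.abs (WW f h i) ^ 2) : ℂ) = if mu f i = 0 then (0 : ℂ) else 1 := by
    rw [← h]
    push_cast
    refine Finset.sum_congr rfl fun g _ => ?_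
    rw [conjTranspose_apply, RCLike.star_def, ← Complex.normSq_eq_conj_mul_self,
      ← Complex.ofReal_pow, Complex.sq_abs]
  by_cases hi : mu f i = 0
  · rw [if_pos hi] at h2
    have : (∑ h, Complex.abs (WW f h i) ^ 2) = 0 := by exact_mod_cast h2
    rw [this]; norm_num
  · rw [if_neg hi] at h2
    have : (∑ h, Complex.abs (WW f h i) ^ 2) = 1 := by exact_mod_cast h2
    rw [this]

lemma col_V_eq_one (i : G) : ∑ h, Complex.abs (VV f h i) ^ 2 = 1 := by
  have h := congrFun (congrFun (hV1 (f := f)) i) i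
  rw [Matrix.mul_apply, Matrix.one_apply_eq] at h
  have h2 : (↑(∑ h, Complex.abs (VV f h i) ^ 2) : ℂ) = 1 := by
    rw [← h]
    push_cast
    refine Finset.sum_congr rfl fun g _ => ?_
    rw [conjTranspose_apply, RCLike.star_def, ← Complex.normSq_eq_conj_mul_self,
      ← Complex.ofReal_pow, Complex.sq_abs]
  exact_mod_cast h2

lemma Mz_entry_bound {z : ℂ} (hz : z.re = 1) (hp0 : 0 < p) (g h : G) :
    Complex.abs (Mz f p z g h) ≤ (∑ i, Real.sqrt (mu f i) ^ p) / (Fintype.card G : ℝ) := by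
  have hN : (0 : ℝ) < (Fintype.card G : ℝ) := by exact_mod_cast Fintype.card_pos
  -- reduce to the (a, 1) entry
  rw [Mz_entry]
  set a := g * h⁻¹
  have hsum : (Fintype.card G : ℂ) * Mz f p z a 1 = ∑ k, Mz f p z (a * k) k := by
    have : ∀ k : G, Mz f p z (a * k) k = Mz f p z a 1 := by
      intro k
      rw [Mz_entry]
      congr 1
      group
    rw [Finset.sum_congr rfl fun k _ => this k, Finset.sum_const, Finset.card_univ,
      nsmul_eq_mul]
  have hexp : ∑ k, Mz f p z (a * k) k
      = ∑ i, ee f p z i * ∑ k, WW f (a * k) i * conj (VV f k i) := by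
    calc ∑ k, Mz f p z (a * k) k
        = ∑ k, ∑ i, ee f p z i * (WW f (a * k) i * conj (VV f k i)) := by
          refine Finset.sum_congr rfl fun k _ => ?_
          rw [Mz_apply]
          exact Finset.sum_congr rfl fun i _ => by ring
      _ = ∑ i, ∑ k, ee f p z i * (WW f (a * k) i * conj (VV f k i)) := Finset.sum_comm
      _ = _ := Finset.sum_congr rfl fun i _ => by rw [← Finset.mul_sum]
  have hinner : ∀ i, Complex.abs (∑ k, WW f (a * k) i * conj (VV f k i)) ≤ 1 := by
    intro i
    refine le_trans (cs_abs _ _) ?_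
    have hW : ∑ k, Complex.abs (WW f (a * k) i) ^ 2 = ∑ k, Complex.abs (WW f k i) ^ 2 :=
      Fintype.sum_equiv (Equiv.mulLeft a) _ _ fun k => by simp [Equiv.mulLeft]
    have hV : ∑ k, Complex.abs (conj (VV f k i)) ^ 2 = 1 := by
      rw [← col_V_eq_one (f := f) i]
      exact Finset.sum_congr rfl fun k _ => by rw [Complex.abs_conj]
    rw [hW, hV, Real.sqrt_one, mul_one]
    exact Real.sqrt_le_one.2 (col_W_le_one i)
  have habs : Complex.abs ((Fintype.card G : ℂ) * Mz f p z a 1)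
      ≤ ∑ i, Real.sqrt (mu f i) ^ p := by
    rw [hsum, hexp]
    refine le_trans (Complex.abs.sum_le _ _) ?_
    refine Finset.sum_le_sum fun i _ => ?_
    rw [_root_.map_mul]
    calc Complex.abs (ee f p z i) * Complex.abs (∑ k, WW f (a * k) i * conj (VV f k i))
        ≤ Complex.abs (ee f p z i) * 1 := by
          exact mul_le_mul_of_nonneg_left (hinner i) (Complex.abs.nonneg _)
      _ = Real.sqrt (mu f i) ^ p := by rw [mul_one, abs_ee_one hz hp0]
  rw [_root_.map_mul, Complex.abs_natCast] at habs
  rw [le_div_iff₀ hN]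
  linarith [habs]

lemma FF_eq_sum (z : ℂ) :
    FF f x p z = (Fintype.card G : ℂ)⁻¹ *
      ∑ g, ∑ h, yyc x p z g * Mz f p z g h * yy x p z h := by
  unfold FF
  congr 1
  calc ∑ i, (∑ g, yyc x p z g * WW f g i) * ee f p z i *
        (∑ h, conj (VV f h i) * yy x p z h)
      = ∑ i, ∑ g, ∑ h, yyc x p z g * (WW f g i * ee f p z i * conj (VV f h i))
          * yy x p z h := by
        refine Finset.sum_congr rfl fun i _ => ?_
        rw [Finset.sum_mul, Finset.sum_mul]
        refine Finset.sum_congr rfl fun g _ => ?_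
        rw [Finset.mul_sum]
        refine Finset.sum_congr rfl fun h _ => by ring
    _ = ∑ g, ∑ h, ∑ i, yyc x p z g * (WW f g i * ee f p z i * conj (VV f h i))
          * yy x p z h := by
        rw [Finset.sum_comm]
        exact Finset.sum_congr rfl fun g _ => Finset.sum_comm
    _ = ∑ g, ∑ h, yyc x p z g * Mz f p z g h * yy x p z h := by
        refine Finset.sum_congr rfl fun g _ => Finset.sum_congr rfl fun h _ => ?_
        rw [Mz_apply, Finset.mul_sum, Finset.sum_mul]
        try exact Finset.sum_congr rfl fun i _ => by ring

lemma yyc_eq_conj (z : ℂ) (g : G) : yyc x p z g = conj (yy x p (conj z) g) := by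
  unfold yyc yy
  by_cases hg : x g = 0
  · simp [hg]
  · rw [if_neg hg, if_neg hg, _root_.map_mul, map_div₀, Complex.conj_ofReal,
      ← Complex.exp_conj]
    congr 2
    simp only [_root_.map_mul, map_div₀, map_ofNat, _root_.map_one, map_add,
      Complex.conj_ofReal, Complex.conj_conj]

lemma abs_yy {z : ℂ} (hz : 0 ≤ z.re) (hp0 : 0 < p) (g : G) :
    Complex.abs (yy x p z g) = Complex.abs (x g) ^ ((2 * p / (p + 1)) * (1 + z.re) / 2) := by
  have hq : 0 < 2 * p / (p + 1) := by positivity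
  unfold yy
  by_cases hg : x g = 0
  · have he : (2 * p / (p + 1)) * (1 + z.re) / 2 ≠ 0 := by positivity
    rw [if_pos hg, hg, map_zero, Real.zero_rpow he]
  · have h0 : 0 < Complex.abs (x g) := by
      simpa [Complex.abs.pos_iff] using hg
    rw [if_neg hg, _root_.map_mul, map_div₀, Complex.abs_ofReal, abs_of_pos h0,
      div_self (ne_of_gt h0), one_mul,
      show ((2 * p / (p + 1) : ℝ) : ℂ) * (1 + z) / 2 * ((Real.log (Complex.abs (x g)) : ℝ) : ℂ)
        = (((2 * p / (p + 1)) * Real.log (Complex.abs (x g)) / 2 : ℝ) : ℂ) * (1 + z) by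
        push_cast; ring,
      Complex.abs_exp, Complex.re_ofReal_mul, Real.rpow_def_of_pos h0]
    congr 1
    simp only [Complex.add_re, Complex.one_re]
    ring

lemma abs_yyc {z : ℂ} (hz : 0 ≤ z.re) (hp0 : 0 < p) (g : G) :
    Complex.abs (yyc x p z g) = Complex.abs (x g) ^ ((2 * p / (p + 1)) * (1 + z.re) / 2) := by
  rw [yyc_eq_conj, Complex.abs_conj, abs_yy (by simpa using hz) hp0 g, Complex.conj_re]

lemma normSq_yy_zero {w : ℂ} (hw : w.re = 0) (hp0 : 0 < p) (g : G) :
    Complex.normSq (yy x p w g) = Complex.abs (x g) ^ (2 * p / (p + 1)) := by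
  rw [← Complex.sq_abs, abs_yy (by rw [hw]) hp0, hw,
    ← Real.rpow_natCast (Complex.abs (x g) ^ (2 * p / (p + 1) * (1 + 0) / 2)) 2,
    ← Real.rpow_mul (Complex.abs.nonneg _)]
  congr 1
  push_cast
  ring

lemma horthW (i j : G) : ∑ g, conj (WW f g i) * WW f g j
    = if i = j then (((if mu f i = 0 then (0:ℝ) else 1) : ℝ) : ℂ) else 0 := by
  have h := congrFun (congrFun (WtW (f := f)) i) j
  rw [Matrix.mul_apply] at h
  simp only [conjTranspose_apply, RCLike.star_def] at h
  rw [h, diagonal_apply]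
  split_ifs <;> simp

lemma horthV (i j : G) : ∑ g, conj (VV f g i) * VV f g j
    = if i = j then (((1:ℝ) : ℝ) : ℂ) else 0 := by
  have h := congrFun (congrFun (hV1 (f := f)) i) j
  rw [Matrix.mul_apply] at h
  simp only [conjTranspose_apply, RCLike.star_def] at h
  rw [h, Matrix.one_apply]
  split_ifs <;> simp

lemma FF_zero (hp : 1 ≤ p) {z : ℂ} (hz : z.re = 0) :
    Complex.abs (FF f x p z)
      ≤ (∑ g, Complex.abs (x g) ^ (2 * p / (p + 1))) / (Fintype.card G : ℝ) := by
  have hp0 : 0 < p := lt_of_lt_of_le one_pos hp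
  have hN : (0 : ℝ) < (Fintype.card G : ℝ) := by exact_mod_cast Fintype.card_pos
  set S := ∑ g, Complex.abs (x g) ^ (2 * p / (p + 1)) with hS
  have hS0 : 0 ≤ S := Finset.sum_nonneg fun g _ => Real.rpow_nonneg (Complex.abs.nonneg _) _
  have hA : ∑ i, Complex.normSq (∑ g, yyc x p z g * WW f g i) ≤ S := by
    have h1 : ∀ i, (∑ g, yyc x p z g * WW f g i)
        = ∑ g, conj (yy x p (conj z) g) * WW f g i := by
      intro i
      exact Finset.sum_congr rfl fun g _ => by rw [yyc_eq_conj]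
    calc ∑ i, Complex.normSq (∑ g, yyc x p z g * WW f g i)
        = ∑ i, Complex.normSq (∑ g, conj (yy x p (conj z) g) * WW f g i) := by
          exact Finset.sum_congr rfl fun i _ => by rw [h1]
      _ ≤ ∑ g, Complex.normSq (yy x p (conj z) g) := by
          refine bessel (WW f) (fun i => if mu f i = 0 then (0:ℝ) else 1) ?_ ?_ horthW _
          · intro i; split_ifs <;> norm_num
          · intro i; split_ifs <;> norm_num
      _ = S := by
          refine Finset.sum_congr rfl fun g _ => ?_
          rw [normSq_yy_zero (by simpa using hz) hp0]
  have hB : ∑ i, Complex.normSq (∑ h, conj (VV f h i) * yy x p z h) ≤ S := by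
    have h1 : ∀ i, Complex.normSq (∑ h, conj (VV f h i) * yy x p z h)
        = Complex.normSq (∑ h, conj (yy x p z h) * VV f h i) := by
      intro i
      rw [← Complex.normSq_conj, map_sum]
      refine congrArg Complex.normSq (Finset.sum_congr rfl fun h _ => ?_)
      rw [_root_.map_mul, Complex.conj_conj]
      ring
    calc ∑ i, Complex.normSq (∑ h, conj (VV f h i) * yy x p z h)
        = ∑ i, Complex.normSq (∑ h, conj (yy x p z h) * VV f h i) := by
          exact Finset.sum_congr rfl fun i _ => h1 i
      _ ≤ ∑ h, Complex.normSq (yy x p z h) := by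
          refine bessel (VV f) (fun _ => (1:ℝ)) (fun _ => by norm_num)
            (fun _ => le_rfl) horthV _
      _ = S := Finset.sum_congr rfl fun g _ => normSq_yy_zero hz hp0 g
  unfold FF
  rw [_root_.map_mul, map_inv₀, Complex.abs_natCast, div_eq_mul_inv, mul_comm S _]
  refine mul_le_mul_of_nonneg_left ?_ (by positivity)
  calc Complex.abs (∑ i, (∑ g, yyc x p z g * WW f g i) * ee f p z i *
        (∑ h, conj (VV f h i) * yy x p z h))
      ≤ ∑ i, Complex.abs ((∑ g, yyc x p z g * WW f g i) * ee f p z i *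
          (∑ h, conj (VV f h i) * yy x p z h)) := Complex.abs.sum_le _ _
    _ ≤ ∑ i, Complex.abs (∑ g, yyc x p z g * WW f g i) *
          Complex.abs (∑ h, conj (VV f h i) * yy x p z h) := by
        refine Finset.sum_le_sum fun i _ => ?_
        rw [_root_.map_mul, _root_.map_mul]
        calc Complex.abs (∑ g, yyc x p z g * WW f g i) * Complex.abs (ee f p z i) *
              Complex.abs (∑ h, conj (VV f h i) * yy x p z h)
            ≤ Complex.abs (∑ g, yyc x p z g * WW f g i) * 1 *
              Complex.abs (∑ h, conj (VV f h i) * yy x p z h) := by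
              have := abs_ee_zero (f := f) (p := p) hz i
              have h0 := Complex.abs.nonneg (∑ g, yyc x p z g * WW f g i)
              have h2 := Complex.abs.nonneg (∑ h, conj (VV f h i) * yy x p z h)
              nlinarith [mul_nonneg h0 h2]
          _ = _ := by rw [mul_one]
    _ ≤ Real.sqrt (∑ i, Complex.abs (∑ g, yyc x p z g * WW f g i) ^ 2) *
          Real.sqrt (∑ i, Complex.abs (∑ h, conj (VV f h i) * yy x p z h) ^ 2) :=
        Real.sum_mul_le_sqrt_mul_sqrt _ _ _
    _ ≤ Real.sqrt S * Real.sqrt S := by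
        refine mul_le_mul (Real.sqrt_le_sqrt ?_) (Real.sqrt_le_sqrt ?_)
          (Real.sqrt_nonneg _) (Real.sqrt_nonneg _)
        · refine le_trans (le_of_eq ?_) hA
          exact Finset.sum_congr rfl fun i _ => Complex.sq_abs _
        · refine le_trans (le_of_eq ?_) hB
          exact Finset.sum_congr rfl fun i _ => Complex.sq_abs _
    _ = S := Real.mul_self_sqrt hS0

lemma FF_one (hp : 1 ≤ p) {z : ℂ} (hz : z.re = 1) :
    Complex.abs (FF f x p z)
      ≤ (∑ i, Real.sqrt (mu f i) ^ p) *
        ((∑ g, Complex.abs (x g) ^ (2 * p / (p + 1))) / (Fintype.card G : ℝ)) ^ 2 := by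
  have hp0 : 0 < p := lt_of_lt_of_le one_pos hp
  have hN : (0 : ℝ) < (Fintype.card G : ℝ) := by exact_mod_cast Fintype.card_pos
  set Sp := ∑ i, Real.sqrt (mu f i) ^ p with hSp
  set S := ∑ g, Complex.abs (x g) ^ (2 * p / (p + 1)) with hS
  have hS0 : 0 ≤ S := Finset.sum_nonneg fun g _ => Real.rpow_nonneg (Complex.abs.nonneg _) _
  have hSp0 : 0 ≤ Sp := Finset.sum_nonneg fun i _ =>
    Real.rpow_nonneg (Real.sqrt_nonneg _) _
  have hy1 : ∀ g : G, Complex.abs (yy x p z g)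
      = Complex.abs (x g) ^ (2 * p / (p + 1)) := by
    intro g
    rw [abs_yy (by rw [hz]; norm_num) hp0, hz]
    congr 1
    ring
  have hyc1 : ∀ g : G, Complex.abs (yyc x p z g)
      = Complex.abs (x g) ^ (2 * p / (p + 1)) := by
    intro g
    rw [abs_yyc (by rw [hz]; norm_num) hp0, hz]
    congr 1
    ring
  rw [FF_eq_sum, _root_.map_mul, map_inv₀, Complex.abs_natCast]
  have key : Complex.abs (∑ g, ∑ h, yyc x p z g * Mz f p z g h * yy x p z h)
      ≤ S * (Sp / (Fintype.card G : ℝ)) * S := by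
    calc Complex.abs (∑ g, ∑ h, yyc x p z g * Mz f p z g h * yy x p z h)
        ≤ ∑ g, Complex.abs (∑ h, yyc x p z g * Mz f p z g h * yy x p z h) :=
          Complex.abs.sum_le _ _
      _ ≤ ∑ g, ∑ h, Complex.abs (yyc x p z g * Mz f p z g h * yy x p z h) :=
          Finset.sum_le_sum fun g _ => Complex.abs.sum_le _ _
      _ ≤ ∑ g, ∑ h, Complex.abs (x g) ^ (2 * p / (p + 1)) *
            (Sp / (Fintype.card G : ℝ)) * Complex.abs (x h) ^ (2 * p / (p + 1)) := by
          refine Finset.sum_le_sum fun g _ => Finset.sum_le_sum fun h _ => ?_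
          rw [_root_.map_mul, _root_.map_mul, hy1, hyc1]
          have hM := Mz_entry_bound (f := f) hz hp0 g h
          have h1 : 0 ≤ Complex.abs (x g) ^ (2 * p / (p + 1)) :=
            Real.rpow_nonneg (Complex.abs.nonneg _) _
          have h2 : 0 ≤ Complex.abs (x h) ^ (2 * p / (p + 1)) :=
            Real.rpow_nonneg (Complex.abs.nonneg _) _
          have h4 : (0:ℝ) ≤ Sp / (Fintype.card G : ℝ) := div_nonneg hSp0 hN.le
          exact mul_le_mul (mul_le_mul_of_nonneg_left hM h1) le_rfl h2
            (mul_nonneg h1 h4)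
      _ = S * (Sp / (Fintype.card G : ℝ)) * S := by
          have heq : ∑ g, ∑ h, Complex.abs (x g) ^ (2 * p / (p + 1)) *
                (Sp / (Fintype.card G : ℝ)) * Complex.abs (x h) ^ (2 * p / (p + 1))
              = (∑ g, Complex.abs (x g) ^ (2 * p / (p + 1))) *
                (Sp / (Fintype.card G : ℝ)) *
                (∑ h, Complex.abs (x h) ^ (2 * p / (p + 1))) := by
            rw [Finset.sum_mul, Finset.sum_mul]
            refine Finset.sum_congr rfl fun g _ => ?_
            rw [Finset.mul_sum]
          rw [heq, ← hS]
  calc (Fintype.card G : ℝ)⁻¹ * Complex.abs (∑ g, ∑ h,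
        yyc x p z g * Mz f p z g h * yy x p z h)
      ≤ (Fintype.card G : ℝ)⁻¹ * (S * (Sp / (Fintype.card G : ℝ)) * S) :=
        mul_le_mul_of_nonneg_left key (by positivity)
    _ = Sp * (S / (Fintype.card G : ℝ)) ^ 2 := by
        field_simp

lemma diff_yy (g : G) : Differentiable ℂ (fun z => yy x p z g) := by
  unfold yy
  by_cases hg : x g = 0
  · simp only [hg, if_pos]
    exact differentiable_const 0
  · simp only [hg, ite_false]
    refine (differentiable_const _).mul ?_
    refine Differentiable.cexp ?_
    fun_prop

lemma diff_yyc (g : G) : Differentiable ℂ (fun z => yyc x p z g) := by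
  unfold yyc
  by_cases hg : x g = 0
  · simp only [hg, if_pos]
    exact differentiable_const 0
  · simp only [hg, ite_false]
    refine (differentiable_const _).mul ?_
    refine Differentiable.cexp ?_
    fun_prop

lemma diff_ee (i : G) : Differentiable ℂ (fun z => ee f p z i) := by
  unfold ee
  by_cases hi : mu f i = 0
  · simp only [hi, if_pos]
    exact differentiable_const 0
  · simp only [hi, ite_false]
    refine Differentiable.cexp ?_
    fun_prop

lemma FF_diff : Differentiable ℂ (FF f x p) := by
  unfold FF
  refine Differentiable.const_mul ?_ _
  refine Differentiable.fun_sum fun i _ => ?_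
  refine Differentiable.mul (Differentiable.mul ?_ ?_) ?_
  · exact Differentiable.fun_sum fun g _ => (diff_yyc g).mul_const _
  · exact diff_ee i
  · exact Differentiable.fun_sum fun h _ => (diff_yy h).const_mul _

lemma FF_bdd (hp : 1 ≤ p) :
    BddAbove ((norm ∘ (FF f x p)) ''
      (Complex.HadamardThreeLines.verticalClosedStrip 0 1)) := by
  have hp0 : 0 < p := lt_of_lt_of_le one_pos hp
  have hq0 : 0 < 2 * p / (p + 1) := by positivity
  set B : G → ℝ := fun g => Complex.abs (x g) ^ ((2 * p / (p + 1)) / 2)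
    + Complex.abs (x g) ^ (2 * p / (p + 1)) with hB
  have hB0 : ∀ g, 0 ≤ B g := fun g => by
    have := Real.rpow_nonneg (Complex.abs.nonneg (x g)) ((2 * p / (p + 1)) / 2)
    have := Real.rpow_nonneg (Complex.abs.nonneg (x g)) (2 * p / (p + 1))
    rw [hB]; dsimp only; linarith
  refine ⟨(Fintype.card G : ℝ)⁻¹ * ∑ i : G, (∑ g, B g * Complex.abs (WW f g i)) *
    (1 + Real.sqrt (mu f i) ^ p) * (∑ h, Complex.abs (VV f h i) * B h), ?_⟩
  rintro v ⟨z, hz, rfl⟩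
  have hz' : z.re ∈ Set.Icc (0:ℝ) 1 := hz
  obtain ⟨hz0, hz1⟩ := hz'
  have hexp_mem : (2 * p / (p + 1)) / 2 ≤ (2 * p / (p + 1)) * (1 + z.re) / 2 ∧
      (2 * p / (p + 1)) * (1 + z.re) / 2 ≤ 2 * p / (p + 1) := by
    constructor <;> nlinarith
  have hyb : ∀ g, Complex.abs (yy x p z g) ≤ B g := by
    intro g
    rw [abs_yy hz0 hp0, hB]
    exact rpow_le_strip (Complex.abs.nonneg _) (by positivity) hexp_mem.1 hexp_mem.2
  have hycb : ∀ g, Complex.abs (yyc x p z g) ≤ B g := by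
    intro g
    rw [abs_yyc hz0 hp0, hB]
    exact rpow_le_strip (Complex.abs.nonneg _) (by positivity) hexp_mem.1 hexp_mem.2
  show ‖FF f x p z‖ ≤ _
  rw [Complex.norm_eq_abs]
  unfold FF
  rw [_root_.map_mul, map_inv₀, Complex.abs_natCast]
  refine mul_le_mul_of_nonneg_left ?_ (by positivity)
  refine le_trans (Complex.abs.sum_le _ _) ?_
  refine Finset.sum_le_sum fun i _ => ?_
  rw [_root_.map_mul, _root_.map_mul]
  have hA : Complex.abs (∑ g, yyc x p z g * WW f g i) ≤ ∑ g, B g * Complex.abs (WW f g i) := by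
    refine le_trans (Complex.abs.sum_le _ _) (Finset.sum_le_sum fun g _ => ?_)
    rw [_root_.map_mul]
    exact mul_le_mul_of_nonneg_right (hycb g) (Complex.abs.nonneg _)
  have hBi : Complex.abs (∑ h, conj (VV f h i) * yy x p z h)
      ≤ ∑ h, Complex.abs (VV f h i) * B h := by
    refine le_trans (Complex.abs.sum_le _ _) (Finset.sum_le_sum fun h _ => ?_)
    rw [_root_.map_mul, Complex.abs_conj]
    exact mul_le_mul_of_nonneg_left (hyb h) (Complex.abs.nonneg _)
  have hE : Complex.abs (ee f p z i) ≤ 1 + Real.sqrt (mu f i) ^ p :=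
    abs_ee_strip hz0 hz1 hp0 i
  have n1 : (0:ℝ) ≤ ∑ g, B g * Complex.abs (WW f g i) :=
    Finset.sum_nonneg fun g _ => mul_nonneg (hB0 g) (Complex.abs.nonneg _)
  have n2 : (0:ℝ) ≤ 1 + Real.sqrt (mu f i) ^ p := by positivity
  refine mul_le_mul (mul_le_mul hA hE (Complex.abs.nonneg _) n1) hBi
    (Complex.abs.nonneg _) (mul_nonneg n1 n2)

lemma ee_at_z0 (hp0 : p ≠ 0) :
    ee f p ((p⁻¹ : ℝ) : ℂ) = fun i => ((Real.sqrt (mu f i) : ℝ) : ℂ) := by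
  funext i
  unfold ee
  by_cases hi : mu f i = 0
  · simp [hi]
  · have h0 : 0 < mu f i := lt_of_le_of_ne (mu_nonneg i) (Ne.symm hi)
    rw [if_neg hi,
      show (p : ℂ) * ((p⁻¹ : ℝ) : ℂ) / 2 * ((Real.log (mu f i) : ℝ) : ℂ)
        = ((Real.log (mu f i) / 2 : ℝ) : ℂ) by
        push_cast
        field_simp,
      ← Complex.ofReal_exp]
    congr 1
    rw [← Real.log_sqrt (mu_nonneg i), Real.exp_log (Real.sqrt_pos.2 h0)]

lemma Mz_at_z0 (hp0 : p ≠ 0) : Mz f p ((p⁻¹ : ℝ) : ℂ) = MM f := by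
  unfold Mz
  rw [ee_at_z0 hp0, W_mul_diag_sqrt, mul_assoc, hV2, mul_one]

lemma yy_at_z0 (hp : 1 ≤ p) (g : G) : yy x p ((p⁻¹ : ℝ) : ℂ) g = x g := by
  have hp0 : 0 < p := lt_of_lt_of_le one_pos hp
  unfold yy
  by_cases hg : x g = 0
  · simp [hg]
  · have h0 : 0 < Complex.abs (x g) := by simpa [Complex.abs.pos_iff] using hg
    have hcoef : ((2 * p / (p + 1) : ℝ) : ℂ) * (1 + ((p⁻¹ : ℝ) : ℂ)) / 2
        * ((Real.log (Complex.abs (x g)) : ℝ) : ℂ)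
        = ((Real.log (Complex.abs (x g)) : ℝ) : ℂ) := by
      have hreal : (2 * p / (p + 1)) * (1 + p⁻¹) / 2 = 1 := by
        field_simp
      calc ((2 * p / (p + 1) : ℝ) : ℂ) * (1 + ((p⁻¹ : ℝ) : ℂ)) / 2
          * ((Real.log (Complex.abs (x g)) : ℝ) : ℂ)
          = (((2 * p / (p + 1)) * (1 + p⁻¹) / 2 : ℝ) : ℂ)
            * ((Real.log (Complex.abs (x g)) : ℝ) : ℂ) := by push_cast; ring
        _ = _ := by rw [hreal]; push_cast; ring
    rw [if_neg hg, hcoef, ← Complex.ofReal_exp, Real.exp_log h0]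
    exact div_mul_cancel₀ _ (by exact_mod_cast ne_of_gt h0)

lemma yyc_at_z0 (hp : 1 ≤ p) (g : G) : yyc x p ((p⁻¹ : ℝ) : ℂ) g = conj (x g) := by
  have hp0 : 0 < p := lt_of_lt_of_le one_pos hp
  unfold yyc
  by_cases hg : x g = 0
  · simp [hg]
  · have h0 : 0 < Complex.abs (x g) := by simpa [Complex.abs.pos_iff] using hg
    have hcoef : ((2 * p / (p + 1) : ℝ) : ℂ) * (1 + ((p⁻¹ : ℝ) : ℂ)) / 2
        * ((Real.log (Complex.abs (x g)) : ℝ) : ℂ)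
        = ((Real.log (Complex.abs (x g)) : ℝ) : ℂ) := by
      have hreal : (2 * p / (p + 1)) * (1 + p⁻¹) / 2 = 1 := by
        field_simp
      calc ((2 * p / (p + 1) : ℝ) : ℂ) * (1 + ((p⁻¹ : ℝ) : ℂ)) / 2
          * ((Real.log (Complex.abs (x g)) : ℝ) : ℂ)
          = (((2 * p / (p + 1)) * (1 + p⁻¹) / 2 : ℝ) : ℂ)
            * ((Real.log (Complex.abs (x g)) : ℝ) : ℂ) := by push_cast; ring
        _ = _ := by rw [hreal]; push_cast; ring
    rw [if_neg hg, hcoef, ← Complex.ofReal_exp, Real.exp_log h0]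
    exact div_mul_cancel₀ _ (by exact_mod_cast ne_of_gt h0)

lemma FF_at_z0 (hp : 1 ≤ p) :
    FF f x p ((p⁻¹ : ℝ) : ℂ) = (Fintype.card G : ℂ)⁻¹ * ∑ g, conj (x g) *
      ((Fintype.card G : ℂ)⁻¹ * ∑ h, f (g * h⁻¹) * x h) := by
  have hp0 : p ≠ 0 := ne_of_gt (lt_of_lt_of_le one_pos hp)
  rw [FF_eq_sum]
  congr 1
  refine Finset.sum_congr rfl fun g _ => ?_
  calc ∑ h, yyc x p ((p⁻¹ : ℝ) : ℂ) g * Mz f p ((p⁻¹ : ℝ) : ℂ) g h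
        * yy x p ((p⁻¹ : ℝ) : ℂ) h
      = ∑ h, conj (x g) * (MM f g h * x h) := by
        refine Finset.sum_congr rfl fun h _ => ?_
        rw [yyc_at_z0 hp, yy_at_z0 hp, Mz_at_z0 hp0]
        ring
    _ = conj (x g) * ∑ h, MM f g h * x h := by rw [Finset.mul_sum]
    _ = conj (x g) * ((Fintype.card G : ℂ)⁻¹ * ∑ h, f (g * h⁻¹) * x h) := by
        congr 1
        rw [Finset.mul_sum]
        refine Finset.sum_congr rfl fun h _ => ?_
        show convMatrix f g h * x h = _
        simp only [convMatrix, Matrix.of_apply]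
        ring

end Main

end Stmt18

open Stmt18

/-- For `f, x : G → ℂ` and real `p ≥ 1`,
`|⟨x, f * x⟩| ≤ ‖f‖_{S_p} ‖x‖_{L^{2p/(p+1)}(G)}²`, where `‖f‖_{S_p}` is the Schatten
`p`-norm of the convolution operator, `⟨x, y⟩ = 𝔼_g conj (x g) * y g`, and
`(f * x)(g) = 𝔼_h f(g h⁻¹) x(h)`. -/
theorem stmt18 (G : Type*) [Group G] [Fintype G] [DecidableEq G] (f x : G → ℂ)
    (p : ℝ) (hp : 1 ≤ p) :
    ‖(Fintype.card G : ℂ)⁻¹ * ∑ g : G, (starRingEnd ℂ) (x g) *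
        ((Fintype.card G : ℂ)⁻¹ * ∑ h : G, f (g * h⁻¹) * x h)‖ ≤
      schattenNorm p (convMatrix f) *
        (((∑ g : G, ‖x g‖ ^ (2 * p / (p + 1))) / (Fintype.card G : ℝ)) ^
          ((p + 1) / p)) := by
  simp only [Complex.norm_eq_abs]
  have hp0 : 0 < p := lt_of_lt_of_le one_pos hp
  have hq0 : 0 < 2 * p / (p + 1) := by positivity
  have hN : (0 : ℝ) < (Fintype.card G : ℝ) := by exact_mod_cast Fintype.card_pos
  set S := ∑ g : G, Complex.abs (x g) ^ (2 * p / (p + 1)) with hSdef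
  have hS0 : 0 ≤ S := Finset.sum_nonneg fun g _ => Real.rpow_nonneg (Complex.abs.nonneg _) _
  set Sp := ∑ i : G, Real.sqrt (mu f i) ^ p with hSpdef
  have hSp0 : 0 ≤ Sp := Finset.sum_nonneg fun i _ => Real.rpow_nonneg (Real.sqrt_nonneg _) _
  have hSchatten : schattenNorm p (convMatrix f) = Sp ^ (p⁻¹) := by
    rw [schattenNorm, one_div, hSpdef]
    rfl
  have hSch0 : 0 ≤ schattenNorm p (convMatrix f) := by
    rw [hSchatten]; positivity
  rcases eq_or_lt_of_le hS0 with hS | hS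
  · -- x is identically zero
    have hx : ∀ g : G, x g = 0 := by
      intro g
      have h := (Finset.sum_eq_zero_iff_of_nonneg
        (fun g _ => Real.rpow_nonneg (Complex.abs.nonneg (x g)) _)).1 hS.symm g
        (Finset.mem_univ g)
      have := (Real.rpow_eq_zero (Complex.abs.nonneg _) (ne_of_gt hq0)).1 h
      exact Complex.abs.eq_zero.1 this
    have hL : (∑ g : G, (starRingEnd ℂ) (x g) *
        ((Fintype.card G : ℂ)⁻¹ * ∑ h : G, f (g * h⁻¹) * x h)) = 0 := by
      refine Finset.sum_eq_zero fun g _ => ?_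
      rw [hx g]
      simp
    rw [hL, mul_zero, map_zero]
    exact mul_nonneg hSch0 (Real.rpow_nonneg (by positivity) _)
  · -- main case
    set z0 : ℂ := ((p⁻¹ : ℝ) : ℂ) with hz0def
    have hz0re : z0.re = p⁻¹ := Complex.ofReal_re _
    have hmem : z0 ∈ Complex.HadamardThreeLines.verticalClosedStrip 0 1 := by
      show z0.re ∈ Set.Icc (0:ℝ) 1
      rw [hz0re]
      exact ⟨inv_nonneg.2 hp0.le, inv_le_one_of_one_le₀ hp⟩
    have h3 := Complex.HadamardThreeLines.norm_le_interp_of_mem_verticalClosedStrip'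
      (f := FF f x p) (a := S / (Fintype.card G : ℝ))
      (b := Sp * (S / (Fintype.card G : ℝ)) ^ 2) zero_lt_one hmem
      (FF_diff).diffContOnCl (FF_bdd hp)
      (fun w hw => by
        rw [Complex.norm_eq_abs]
        exact FF_zero hp (Set.mem_preimage.1 hw))
      (fun w hw => by
        rw [Complex.norm_eq_abs]
        exact FF_one hp (Set.mem_preimage.1 hw))
    simp only [sub_zero, div_one] at h3
    rw [Complex.norm_eq_abs, FF_at_z0 hp, hz0re] at h3
    refine le_trans h3 (le_of_eq ?_)
    set A := S / (Fintype.card G : ℝ) with hAdef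
    have hA0 : 0 < A := div_pos hS hN
    calc A ^ (1 - p⁻¹) * (Sp * A ^ 2) ^ p⁻¹
        = A ^ (1 - p⁻¹) * (Sp ^ p⁻¹ * (A ^ (2:ℝ)) ^ p⁻¹) := by
          rw [Real.mul_rpow hSp0 (by positivity), Real.rpow_two]
      _ = Sp ^ p⁻¹ * (A ^ (1 - p⁻¹) * A ^ ((2:ℝ) * p⁻¹)) := by
          rw [← Real.rpow_mul hA0.le]
          ring
      _ = Sp ^ p⁻¹ * A ^ ((1 - p⁻¹) + (2:ℝ) * p⁻¹) := by
          rw [Real.rpow_add hA0]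
      _ = schattenNorm p (convMatrix f) * A ^ ((p + 1) / p) := by
          rw [hSchatten]
          congr 1
          field_simp
          ring
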